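/- Let 1 < α ≤ 2, 0 ≤ β < α - 1, a < b. For all s, t ∈ [a,b], the Green's function G(t,s) satisfies 0 ≤ G(t,s) ≤ G(s,s) ≤ (1/Γ(α)) · ((b-a)(α-1)/(2α-2-β))^(α-1) · ((α-1-β)/(2α-2-β))^(α-1-β). -/

import Mathlib

open Real

lemma aux_rpow_add_le (x y p : ℝ) (hx : 0 ≤ x) (hy : 0 ≤ y) (hp : 0 ≤ p) (hp1 : p ≤ 1) :
    (x + y) ^ p ≤ x ^ p + y ^ p := by
  lift x to NNReal using hx
  lift y to NNReal using hy
  have := NNReal.rpow_add_le_add_rpow x y hp hp1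
  exact_mod_cast this

lemma aux_max (p q x y : ℝ) (hp : 0 < p) (hq : 0 < q) (hx : 0 ≤ x) (hy : 0 ≤ y) :
    x ^ p * y ^ q ≤ ((x + y) * p / (p + q)) ^ p * ((x + y) * q / (p + q)) ^ q := by
  have hpq : 0 < p + q := by linarith
  rcases eq_or_lt_of_le (add_nonneg hx hy) with hS | hS
  · have hx0 : x = 0 := by linarith
    simp [hx0, Real.zero_rpow hp.ne']
    positivity
  · set S := x + y with hSdef
    have hX : 0 < S * p / (p + q) := by positivity
    have hY : 0 < S * q / (p + q) := by positivity
    set X := S * p / (p + q) with hXdef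
    set Y := S * q / (p + q) with hYdef
    have hxX : 0 ≤ x / X := div_nonneg hx hX.le
    have hyY : 0 ≤ y / Y := div_nonneg hy hY.le
    have hw : p / (p + q) + q / (p + q) = 1 := by field_simp
    have hgm := Real.geom_mean_le_arith_mean2_weighted
      (by positivity) (by positivity) hxX hyY hw
    have harith : p / (p + q) * (x / X) + q / (p + q) * (y / Y) = 1 := by
      rw [hXdef, hYdef]
      field_simp
      ring
    rw [harith] at hgm
    have key : (x / X) ^ p * (y / Y) ^ q ≤ 1 := by
      have h1 : ((x / X) ^ (p / (p + q)) * (y / Y) ^ (q / (p + q))) ^ (p + q) ≤ 1 :=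
        Real.rpow_le_one (by positivity) hgm hpq.le
      rwa [Real.mul_rpow (by positivity) (by positivity),
        ← Real.rpow_mul hxX, ← Real.rpow_mul hyY,
        div_mul_cancel₀ _ hpq.ne', div_mul_cancel₀ _ hpq.ne'] at h1
    rw [Real.div_rpow hx hX.le, Real.div_rpow hy hY.le, div_mul_div_comm] at key
    rw [div_le_one (by positivity)] at key
    exact key

noncomputable def G (a b α β t s : ℝ) : ℝ :=
  if s ≤ t then
    (1 / Real.Gamma α) *
      ((t - a) ^ (α - 1) * (b - s) ^ (α - 1 - β) / (b - a) ^ (α - 1 - β) -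
        (t - s) ^ (α - 1))
  else
    (1 / Real.Gamma α) *
      ((t - a) ^ (α - 1) * (b - s) ^ (α - 1 - β) / (b - a) ^ (α - 1 - β))

theorem stmt_9 (α β a b : ℝ) (hα : 1 < α) (hα2 : α ≤ 2) (hβ : 0 ≤ β)
    (hβα : β < α - 1) (hab : a < b) :
    ∀ s ∈ Set.Icc a b, ∀ t ∈ Set.Icc a b,
      0 ≤ G a b α β t s ∧ G a b α β t s ≤ G a b α β s s ∧
        G a b α β s s ≤ (1 / Real.Gamma α) *
          ((b - a) * (α - 1) / (2 * α - 2 - β)) ^ (α - 1) *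
          ((α - 1 - β) / (2 * α - 2 - β)) ^ (α - 1 - β) := by
  rintro s ⟨hsa, hsb⟩ t ⟨hta, htb⟩
  have hp : 0 < α - 1 := by linarith
  have hp1 : α - 1 ≤ 1 := by linarith
  have hq : 0 < α - 1 - β := by linarith
  have hqp : α - 1 - β ≤ α - 1 := by linarith
  have hΓ : 0 < Real.Gamma α := Real.Gamma_pos_of_pos (by linarith)
  have hΓi : 0 < 1 / Real.Gamma α := by positivity
  have hba : 0 < b - a := by linarith
  have hbaq : (0:ℝ) < (b - a) ^ (α - 1 - β) := Real.rpow_pos_of_pos hba _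
  have hC0 : 0 ≤ (b - s) ^ (α - 1 - β) / (b - a) ^ (α - 1 - β) :=
    div_nonneg (Real.rpow_nonneg (by linarith) _) hbaq.le
  have hC1 : (b - s) ^ (α - 1 - β) / (b - a) ^ (α - 1 - β) ≤ 1 := by
    rw [div_le_one hbaq]
    exact Real.rpow_le_rpow (by linarith) (by linarith) hq.le
  have hGss : G a b α β s s =
      (1 / Real.Gamma α) *
        ((s - a) ^ (α - 1) * (b - s) ^ (α - 1 - β) / (b - a) ^ (α - 1 - β)) := by
    rw [G, if_pos le_rfl, sub_self, Real.zero_rpow hp.ne', sub_zero]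
  -- part 3
  have part3 : G a b α β s s ≤ (1 / Real.Gamma α) *
      ((b - a) * (α - 1) / (2 * α - 2 - β)) ^ (α - 1) *
      ((α - 1 - β) / (2 * α - 2 - β)) ^ (α - 1 - β) := by
    rw [hGss]
    have hmax := aux_max (α - 1) (α - 1 - β) (s - a) (b - s) hp hq
      (by linarith) (by linarith)
    have hsum : s - a + (b - s) = b - a := by ring
    rw [hsum] at hmax
    have hYeq : ((b - a) * (α - 1 - β) / (α - 1 + (α - 1 - β))) ^ (α - 1 - β) =
        (b - a) ^ (α - 1 - β) * ((α - 1 - β) / (2 * α - 2 - β)) ^ (α - 1 - β) := by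
      rw [← Real.mul_rpow hba.le (div_nonneg hq.le (by linarith))]
      congr 1
      have h2 : α - 1 + (α - 1 - β) = 2 * α - 2 - β := by ring
      rw [h2]
      ring
    have hXeq : ((b - a) * (α - 1) / (α - 1 + (α - 1 - β))) ^ (α - 1) =
        ((b - a) * (α - 1) / (2 * α - 2 - β)) ^ (α - 1) := by
      congr 2
      ring
    rw [hYeq, hXeq] at hmax
    rw [mul_assoc, mul_le_mul_iff_right₀ hΓi, div_le_iff₀ hbaq]
    calc (s - a) ^ (α - 1) * (b - s) ^ (α - 1 - β)
        ≤ ((b - a) * (α - 1) / (2 * α - 2 - β)) ^ (α - 1) *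
          ((b - a) ^ (α - 1 - β) * ((α - 1 - β) / (2 * α - 2 - β)) ^ (α - 1 - β)) := hmax
      _ = ((b - a) * (α - 1) / (2 * α - 2 - β)) ^ (α - 1) *
          ((α - 1 - β) / (2 * α - 2 - β)) ^ (α - 1 - β) * (b - a) ^ (α - 1 - β) := by ring
  rcases le_or_gt s t with hst | hst
  · -- s ≤ t
    have hGts : G a b α β t s =
        (1 / Real.Gamma α) *
          ((t - a) ^ (α - 1) * (b - s) ^ (α - 1 - β) / (b - a) ^ (α - 1 - β) -
            (t - s) ^ (α - 1)) := by rw [G, if_pos hst]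
    have hkey : (t - s) ^ (α - 1) ≤
        (t - a) ^ (α - 1) * (b - s) ^ (α - 1 - β) / (b - a) ^ (α - 1 - β) := by
      have h1 : (t - s) ^ (α - 1) ≤ ((t - a) * ((b - s) / (b - a))) ^ (α - 1) := by
        apply Real.rpow_le_rpow (by linarith) ?_ hp.le
        rw [← mul_div_assoc, le_div_iff₀ hba]
        nlinarith [mul_nonneg (sub_nonneg.2 htb) (sub_nonneg.2 hsa)]
      have h2 : ((t - a) * ((b - s) / (b - a))) ^ (α - 1) =
          (t - a) ^ (α - 1) * ((b - s) / (b - a)) ^ (α - 1) :=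
        Real.mul_rpow (by linarith) (div_nonneg (by linarith) hba.le)
      have h3 : ((b - s) / (b - a)) ^ (α - 1) ≤ ((b - s) / (b - a)) ^ (α - 1 - β) := by
        rcases eq_or_lt_of_le hsb with h | h
        · rw [h, sub_self, zero_div, Real.zero_rpow hp.ne', Real.zero_rpow hq.ne']
        · exact Real.rpow_le_rpow_of_exponent_ge (div_pos (by linarith) hba)
            (by rw [div_le_one hba]; linarith) hqp
      have h4 : ((b - s) / (b - a)) ^ (α - 1 - β) =
          (b - s) ^ (α - 1 - β) / (b - a) ^ (α - 1 - β) :=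
        Real.div_rpow (by linarith) hba.le _
      calc (t - s) ^ (α - 1) ≤ (t - a) ^ (α - 1) * ((b - s) / (b - a)) ^ (α - 1) := by
            rw [← h2]; exact h1
        _ ≤ (t - a) ^ (α - 1) * ((b - s) ^ (α - 1 - β) / (b - a) ^ (α - 1 - β)) := by
            rw [← h4]
            exact mul_le_mul_of_nonneg_left h3 (Real.rpow_nonneg (by linarith) _)
        _ = (t - a) ^ (α - 1) * (b - s) ^ (α - 1 - β) / (b - a) ^ (α - 1 - β) := by ring
    refine ⟨?_, ?_, part3⟩
    · rw [hGts]
      apply mul_nonneg hΓi.le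
      linarith
    · rw [hGts, hGss]
      apply mul_le_mul_of_nonneg_left _ hΓi.le
      have hsub : (t - a) ^ (α - 1) ≤ (s - a) ^ (α - 1) + (t - s) ^ (α - 1) := by
        have := aux_rpow_add_le (s - a) (t - s) (α - 1) (by linarith) (by linarith) hp.le hp1
        have he : s - a + (t - s) = t - a := by ring
        rwa [he] at this
      have h5 : (t - a) ^ (α - 1) * ((b - s) ^ (α - 1 - β) / (b - a) ^ (α - 1 - β)) ≤
          ((s - a) ^ (α - 1) + (t - s) ^ (α - 1)) *
            ((b - s) ^ (α - 1 - β) / (b - a) ^ (α - 1 - β)) :=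
        mul_le_mul_of_nonneg_right hsub hC0
      have h6 : (t - s) ^ (α - 1) * ((b - s) ^ (α - 1 - β) / (b - a) ^ (α - 1 - β)) ≤
          (t - s) ^ (α - 1) :=
        mul_le_of_le_one_right (Real.rpow_nonneg (by linarith) _) hC1
      rw [mul_div_assoc, mul_div_assoc]
      rw [add_mul] at h5
      linarith [h5, h6]
  · -- t < s
    have hGts : G a b α β t s =
        (1 / Real.Gamma α) *
          ((t - a) ^ (α - 1) * (b - s) ^ (α - 1 - β) / (b - a) ^ (α - 1 - β)) := by
      rw [G, if_neg (not_le.2 hst)]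
    refine ⟨?_, ?_, part3⟩
    · rw [hGts]
      apply mul_nonneg hΓi.le
      apply div_nonneg _ hbaq.le
      exact mul_nonneg (Real.rpow_nonneg (by linarith) _) (Real.rpow_nonneg (by linarith) _)
    · rw [hGts, hGss]
      apply mul_le_mul_of_nonneg_left _ hΓi.le
      have h : (t - a) ^ (α - 1) ≤ (s - a) ^ (α - 1) :=
        Real.rpow_le_rpow (by linarith) (by linarith) hp.le
      have h2 := mul_le_mul_of_nonneg_right h
        (Real.rpow_nonneg (by linarith : (0:ℝ) ≤ b - s) (α - 1 - β))
      exact div_le_div_of_nonneg_right h2 hbaq.le
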